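/- Let p_a, p_b, p_i, p_c ∈ ℝ² be four points, no three collinear, with strictly increasing x-coordinates in the order p_a, p_b, p_i, p_c. Then p_i lies in the interior of the triangle with vertices p_a, p_b, p_c if and only if both of the following hold: if (p_a, p_b, p_c) is positively oriented then (p_a, p_i, p_c) is positively oriented and (p_b, p_i, p_c) is negatively oriented; and if (p_a, p_b, p_c) is negatively oriented then (p_a, p_i, p_c) is negatively oriented and (p_b, p_i, p_c) is positively oriented. -/
import Mathlib

/-- Orientation determinant of three points in the plane:
`det [[1,1,1],[pₓ,qₓ,rₓ],[p_y,q_y,r_y]]`.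
The triple `(p,q,r)` is positively oriented iff `det3 p q r > 0`,
and negatively oriented iff `det3 p q r < 0`. -/
noncomputable def det3 (p q r : ℝ × ℝ) : ℝ :=
  Matrix.det !![(1:ℝ), 1, 1; p.1, q.1, r.1; p.2, q.2, r.2]

/-- A set of points in the plane is in general position if no three
distinct points of it are collinear. -/
def InGenPos (S : Set (ℝ × ℝ)) : Prop :=
  ∀ p ∈ S, ∀ q ∈ S, ∀ r ∈ S, p ≠ q → p ≠ r → q ≠ r →
    ¬ Collinear ℝ ({p, q, r} : Set (ℝ × ℝ))

/-- `P` is a `k`-gon of `S`: a `k`-element subset of `S` in convex position,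
i.e. every point of `P` is an extreme point of the convex hull of `P`. -/
def IsGon (k : ℕ) (S P : Set (ℝ × ℝ)) : Prop :=
  P ⊆ S ∧ P.Finite ∧ P.ncard = k ∧
    ∀ p ∈ P, p ∈ Set.extremePoints ℝ (convexHull ℝ P)

/-- `P` is a `k`-hole of `S`: a `k`-gon of `S` whose convex hull contains
no point of `S` other than the `k` points of `P`. -/
def IsHole (k : ℕ) (S P : Set (ℝ × ℝ)) : Prop :=
  IsGon k S P ∧ ∀ q ∈ S, q ∈ convexHull ℝ P → q ∈ P

lemma det3_eq (p q r : ℝ × ℝ) :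
    det3 p q r = (q.1 - p.1) * (r.2 - p.2) - (q.2 - p.2) * (r.1 - p.1) := by
  simp [det3, Matrix.det_fin_three]; ring

lemma collinear_of_det3_eq_zero {p q r : ℝ × ℝ} (hpq : p.1 ≠ q.1)
    (h : det3 p q r = 0) : Collinear ℝ ({p, q, r} : Set (ℝ × ℝ)) := by
  rw [collinear_iff_of_mem (Set.mem_insert p _)]
  refine ⟨q - p, ?_⟩
  intro x hx
  rw [det3_eq] at h
  have hne : q.1 - p.1 ≠ 0 := sub_ne_zero.2 fun hh => hpq hh.symm
  rcases hx with rfl | rfl | rfl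
  · exact ⟨0, by simp⟩
  · exact ⟨1, by simp⟩
  · refine ⟨(x.1 - p.1) / (q.1 - p.1), ?_⟩
    have h1 : ((x.1 - p.1) / (q.1 - p.1)) * (q.1 - p.1) = x.1 - p.1 := by
      field_simp
    have h2 : ((x.1 - p.1) / (q.1 - p.1)) * (q.2 - p.2) = x.2 - p.2 := by
      rw [div_mul_eq_mul_div, div_eq_iff hne]; nlinarith [h]
    have : x = ((x.1 - p.1) / (q.1 - p.1)) • (q - p) + p := by
      apply Prod.ext <;> simp [Prod.smul_fst, Prod.smul_snd, smul_eq_mul]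
      · linarith [h1]
      · linarith [h2]
    simpa [vadd_eq_add] using this

lemma det3_ne_of_gp {S : Set (ℝ × ℝ)} (hgp : InGenPos S) {p q r : ℝ × ℝ}
    (hp : p ∈ S) (hq : q ∈ S) (hr : r ∈ S)
    (hpq : p.1 ≠ q.1) (hpr : p.1 ≠ r.1) (hqr : q.1 ≠ r.1) :
    det3 p q r ≠ 0 := fun h =>
  hgp p hp q hq r hr (fun e => hpq (by rw [e])) (fun e => hpr (by rw [e]))
    (fun e => hqr (by rw [e])) (collinear_of_det3_eq_zero hpq h)

/-- Characterization of containment in a triangle when the query point lies,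
in x-order, between the middle and the rightmost vertex: `pa, pb, pi, pc` have
strictly increasing x-coordinates. -/
theorem inside_triangle_iff_orientations_right (pa pb pi pc : ℝ × ℝ)
    (hgp : InGenPos ({pa, pb, pi, pc} : Set (ℝ × ℝ)))
    (h1 : pa.1 < pb.1) (h2 : pb.1 < pi.1) (h3 : pi.1 < pc.1) :
    pi ∈ interior (convexHull ℝ ({pa, pb, pc} : Set (ℝ × ℝ))) ↔
      ((det3 pa pb pc > 0 → det3 pa pi pc > 0 ∧ det3 pb pi pc < 0) ∧
       (det3 pa pb pc < 0 → det3 pa pi pc < 0 ∧ det3 pb pi pc > 0)) := by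
  have ma : pa ∈ ({pa, pb, pi, pc} : Set (ℝ × ℝ)) := by simp
  have mb : pb ∈ ({pa, pb, pi, pc} : Set (ℝ × ℝ)) := by simp
  have mi : pi ∈ ({pa, pb, pi, pc} : Set (ℝ × ℝ)) := by simp
  have mc : pc ∈ ({pa, pb, pi, pc} : Set (ℝ × ℝ)) := by simp
  have hD : det3 pa pb pc ≠ 0 :=
    det3_ne_of_gp hgp ma mb mc h1.ne (by linarith) (by linarith)
  have hA : det3 pi pb pc ≠ 0 :=
    det3_ne_of_gp hgp mi mb mc h2.ne' (by linarith) (by linarith)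
  have hB : det3 pa pi pc ≠ 0 :=
    det3_ne_of_gp hgp ma mi mc (by linarith) (by linarith) h3.ne
  have hncol : ¬ Collinear ℝ ({pa, pb, pc} : Set (ℝ × ℝ)) :=
    hgp pa ma pb mb pc mc (fun e => h1.ne (by rw [e]))
      (fun e => (show pa.1 < pc.1 by linarith).ne (by rw [e]))
      (fun e => (show pb.1 < pc.1 by linarith).ne (by rw [e]))
  have haff : AffineIndependent ℝ ![pa, pb, pc] :=
    affineIndependent_iff_not_collinear_set.2 hncol
  have htop : affineSpan ℝ (Set.range ![pa, pb, pc]) = ⊤ := by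
    rw [haff.affineSpan_eq_top_iff_card_eq_finrank_add_one]
    simp
  let b : AffineBasis (Fin 3) ℝ (ℝ × ℝ) := ⟨![pa, pb, pc], haff, htop⟩
  have hrange : Set.range ![pa, pb, pc] = ({pa, pb, pc} : Set (ℝ × ℝ)) := by
    ext x
    simp [Matrix.range_cons, Matrix.range_empty]
    tauto
  set D := det3 pa pb pc with hDdef
  set A := det3 pi pb pc with hAdef
  set B := det3 pa pi pc with hBdef
  set C := det3 pa pb pi with hCdef
  set w : Fin 3 → ℝ := ![A / D, B / D, C / D] with hwdef
  have hw : Finset.univ.sum w = 1 := by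
    have hsum : A + B + C = D := by
      rw [hAdef, hBdef, hCdef, hDdef]; simp only [det3_eq]; ring
    rw [Fin.sum_univ_three]
    show A / D + B / D + C / D = 1
    field_simp
    linarith [hsum]
  have hcomb : Finset.univ.affineCombination ℝ (⇑b) w = pi := by
    rw [show (⇑b) = ![pa, pb, pc] from rfl]
    rw [Finset.affineCombination_eq_linear_combination _ _ _ hw]
    rw [Fin.sum_univ_three]
    show (A / D) • pa + (B / D) • pb + (C / D) • pc = pi
    have e1 : A * pa.1 + B * pb.1 + C * pc.1 = D * pi.1 := by
      rw [hAdef, hBdef, hCdef, hDdef]; simp only [det3_eq]; ring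
    have e2 : A * pa.2 + B * pb.2 + C * pc.2 = D * pi.2 := by
      rw [hAdef, hBdef, hCdef, hDdef]; simp only [det3_eq]; ring
    apply Prod.ext <;> simp only [Prod.fst_add, Prod.snd_add, Prod.smul_fst,
      Prod.smul_snd, smul_eq_mul]
    · field_simp; linarith [e1]
    · field_simp; linarith [e2]
  have hco : ∀ i, b.coord i pi = w i := by
    intro i
    rw [← hcomb]
    exact b.coord_apply_combination_of_mem (Finset.mem_univ i) hw
  have hint : interior (convexHull ℝ ({pa, pb, pc} : Set (ℝ × ℝ)))
      = {x | ∀ i, 0 < b.coord i x} := by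
    rw [← hrange]
    exact b.interior_convexHull
  rw [hint]
  have hmem : (pi ∈ {x | ∀ i, 0 < b.coord i x}) ↔ (0 < A / D ∧ 0 < B / D ∧ 0 < C / D) := by
    constructor
    · intro h
      refine ⟨?_, ?_, ?_⟩
      · have := h 0; rwa [hco 0] at this
      · have := h 1; rwa [hco 1] at this
      · have := h 2; rwa [hco 2] at this
    · rintro ⟨h0, h1', h2'⟩ i
      rw [hco i]
      fin_cases i <;> assumption
  rw [hmem]
  have hswap : det3 pb pi pc = -A := by
    rw [hAdef]; simp only [det3_eq]; ring
  have hid : (pc.1 - pb.1) * C = (pi.1 - pb.1) * D + (pb.1 - pa.1) * A := by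
    rw [hAdef, hCdef, hDdef]; simp only [det3_eq]; ring
  rw [hswap]
  constructor
  · rintro ⟨h0, h1', _⟩
    constructor
    · intro hDpos
      have hApos : 0 < A := by
        rcases div_pos_iff.1 h0 with ⟨h, _⟩ | ⟨_, h⟩ <;> linarith
      have hBpos : 0 < B := by
        rcases div_pos_iff.1 h1' with ⟨h, _⟩ | ⟨_, h⟩ <;> linarith
      exact ⟨hBpos, by linarith⟩
    · intro hDneg
      have hAneg : A < 0 := by
        rcases div_pos_iff.1 h0 with ⟨_, h⟩ | ⟨h, _⟩ <;> linarith
      have hBneg : B < 0 := by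
        rcases div_pos_iff.1 h1' with ⟨_, h⟩ | ⟨h, _⟩ <;> linarith
      exact ⟨hBneg, by linarith⟩
  · rintro ⟨hp, hn⟩
    rcases lt_trichotomy D 0 with hDneg | hD0 | hDpos
    · obtain ⟨hBneg, hAneg'⟩ := hn hDneg
      have hAneg : A < 0 := by linarith
      have hCneg : C < 0 := by nlinarith
      exact ⟨div_pos_iff.2 (Or.inr ⟨hAneg, hDneg⟩),
        div_pos_iff.2 (Or.inr ⟨hBneg, hDneg⟩),
        div_pos_iff.2 (Or.inr ⟨hCneg, hDneg⟩)⟩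
    · exact absurd hD0 hD
    · obtain ⟨hBpos, hApos'⟩ := hp hDpos
      have hApos : 0 < A := by linarith
      have hCpos : 0 < C := by nlinarith
      exact ⟨div_pos (by linarith) hDpos, div_pos hBpos hDpos, div_pos hCpos hDpos⟩
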